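/- Let p ≥ 3 be a prime and let n ≥ 3 be a natural number. Then there exists a p-progression-free subset S of F_p^n with |S| ≥ (p-1)^n + ((n-2)/2)·(p-1)·(p-2)^{n-3} (note that (p-1)/2 is an integer since p is odd). -/

import Mathlib

/-- A subset `S` of `F_p^n` is `k`-progression-free if there are no `a, d` with `d ≠ 0`
such that `a + i • d ∈ S` for all `i ∈ {0, …, k-1}`. -/
def ProgFree (p n k : ℕ) (S : Finset (Fin n → ZMod p)) : Prop :=
  ¬ ∃ a d : Fin n → ZMod p, d ≠ 0 ∧ ∀ i : ℕ, i < k → a + (i : ZMod p) • d ∈ S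

set_option linter.unusedSectionVars false

namespace Stmt8
open Finset Fintype

variable (p m : ℕ) [NeZero p]

abbrev iL : Fin (m+3) := Fin.last (m+2)

def Mid (j : Fin (m+3)) : Prop := j ≠ 0 ∧ j ≠ iL m

instance : DecidablePred (Mid m) := fun _ => instDecidableAnd

lemma iL_ne_zero : iL m ≠ 0 := by
  intro h
  have := congrArg Fin.val h
  simp [iL, Fin.last] at this

lemma mid_cases (i : Fin (m+3)) : i = 0 ∨ i = iL m ∨ Mid m i := by
  by_cases h0 : i = 0
  · exact Or.inl h0
  by_cases hL : i = iL m
  · exact Or.inr (Or.inl hL)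
  · exact Or.inr (Or.inr ⟨h0, hL⟩)

def nzs : Finset (ZMod p) := univ.erase 0
def Ms : Finset (ZMod p) := (univ.erase 0).erase 1
def Ds : Finset (ZMod p) := univ.filter (fun c => c.val ≤ (p-1)/2 ∧ c ≠ 0)
def NDs : Finset (ZMod p) := univ.filter (fun c => (p-1)/2 < c.val)
def mids : Finset (Fin (m+3)) := univ.filter (Mid m)

lemma mem_nzs {c : ZMod p} : c ∈ nzs p ↔ c ≠ 0 := by simp [nzs]
lemma mem_Ms {c : ZMod p} : c ∈ Ms p ↔ c ≠ 1 ∧ c ≠ 0 := by simp [Ms]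
lemma mem_Ds {c : ZMod p} : c ∈ Ds p ↔ c.val ≤ (p-1)/2 ∧ c ≠ 0 := by simp [Ds]
lemma mem_NDs {c : ZMod p} : c ∈ NDs p ↔ (p-1)/2 < c.val := by simp [NDs]
lemma mem_mids {j : Fin (m+3)} : j ∈ mids m ↔ Mid m j := by simp [mids]

def fam (A B : Finset (ZMod p)) (C : Fin (m+3) → Finset (ZMod p)) : Fin (m+3) → Finset (ZMod p) :=
  fun i => if i = 0 then A else if i = iL m then B else C i

def pif (A B : Finset (ZMod p)) (C : Fin (m+3) → Finset (ZMod p)) : Finset (Fin (m+3) → ZMod p) :=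
  Fintype.piFinset (fam p m A B C)

lemma mem_pif {A B : Finset (ZMod p)} {C : Fin (m+3) → Finset (ZMod p)} {x : Fin (m+3) → ZMod p} :
    x ∈ pif p m A B C ↔ x 0 ∈ A ∧ x (iL m) ∈ B ∧ ∀ k, Mid m k → x k ∈ C k := by
  simp only [pif, Fintype.mem_piFinset]
  constructor
  · intro h
    refine ⟨?_, ?_, ?_⟩
    · have := h 0; simpa [fam] using this
    · have := h (iL m); simpa [fam, iL_ne_zero m] using this
    · intro k hk
      have := h k
      simpa [fam, hk.1, hk.2] using this
  · rintro ⟨h0, hL, hm⟩ i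
    rcases mid_cases m i with rfl | rfl | hi
    · simpa [fam] using h0
    · simpa [fam, iL_ne_zero m] using hL
    · simpa [fam, hi.1, hi.2] using hm i hi

def grid := pif p m (nzs p) (nzs p) (fun _ => nzs p)
def Wg := (nzs p).biUnion (fun c => pif p m {c} {c} (fun _ => nzs p) \ pif p m {c} {c} (fun _ => Ms p))
def T1 := (Ds p).biUnion (fun b => pif p m {0} {b} (fun _ => nzs p) \ pif p m {0} {b} (fun _ => Ms p))
def T3 := (Ds p).biUnion (fun b => pif p m {b} {0} (fun _ => nzs p) \ pif p m {b} {0} (fun _ => Ms p))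
def T2 := (NDs p).biUnion (fun c => (mids m).biUnion
    (fun j => pif p m {c} {c} (fun k => if k = j then ({0} : Finset (ZMod p)) else Ms p)))
def S := ((grid p m \ Wg p m) ∪ T1 p m) ∪ (T3 p m ∪ T2 p m)


-- destructor lemmas
lemma S_dest (hp3 : 3 ≤ p) {x : Fin (m+3) → ZMod p} (hx : x ∈ S p m) :
    ((∀ i, x i ≠ 0) ∧ ¬(x 0 = x (iL m) ∧ ∃ k, Mid m k ∧ x k = 1))
    ∨ (x 0 = 0 ∧ ((x (iL m)).val ≤ (p-1)/2 ∧ x (iL m) ≠ 0) ∧ (∀ k, Mid m k → x k ≠ 0) ∧ (∃ k, Mid m k ∧ x k = 1))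
    ∨ (x (iL m) = 0 ∧ ((x 0).val ≤ (p-1)/2 ∧ x 0 ≠ 0) ∧ (∀ k, Mid m k → x k ≠ 0) ∧ (∃ k, Mid m k ∧ x k = 1))
    ∨ (∃ j, Mid m j ∧ x 0 = x (iL m) ∧ (p-1)/2 < (x 0).val ∧ x j = 0 ∧
        (∀ k, Mid m k → k ≠ j → x k ≠ 1 ∧ x k ≠ 0)) := by
  simp only [S, mem_union] at hx
  rcases hx with (hx | hx) | (hx | hx)
  · -- grid \ Wg
    left
    rw [mem_sdiff] at hx
    obtain ⟨hg, hw⟩ := hx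
    simp only [grid] at hg
    rw [mem_pif] at hg
    obtain ⟨h0, hL, hmid⟩ := hg
    rw [mem_nzs] at h0 hL
    have hall : ∀ i, x i ≠ 0 := by
      intro i
      rcases mid_cases m i with rfl | rfl | hi
      · exact h0
      · exact hL
      · exact (mem_nzs p).mp (hmid i hi)
    refine ⟨hall, ?_⟩
    rintro ⟨heq, k, hk, hk1⟩
    apply hw
    simp only [Wg]
    rw [mem_biUnion]
    refine ⟨x 0, (mem_nzs p).mpr h0, ?_⟩
    rw [mem_sdiff, mem_pif, mem_pif]
    refine ⟨⟨mem_singleton_self _, by rw [← heq]; exact mem_singleton_self _,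
        fun k' hk' => hmid k' hk'⟩, ?_⟩
    rintro ⟨-, -, hms⟩
    have := (mem_Ms p).mp (hms k hk)
    exact this.1 hk1
  · -- T1
    right; left
    simp only [T1] at hx
    rw [mem_biUnion] at hx
    obtain ⟨b, hb, hx⟩ := hx
    rw [mem_Ds] at hb
    rw [mem_sdiff, mem_pif] at hx
    obtain ⟨⟨h0, hL, hmid⟩, hnot⟩ := hx
    rw [mem_singleton] at h0 hL
    subst hL
    refine ⟨h0, hb, fun k hk => (mem_nzs p).mp (hmid k hk), ?_⟩
    by_contra hno
    push_neg at hno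
    apply hnot
    rw [mem_pif]
    refine ⟨by simp [h0], mem_singleton_self _, fun k hk => ?_⟩
    rw [mem_Ms]
    exact ⟨hno k hk, (mem_nzs p).mp (hmid k hk)⟩
  · -- T3
    right; right; left
    simp only [T3] at hx
    rw [mem_biUnion] at hx
    obtain ⟨b, hb, hx⟩ := hx
    rw [mem_Ds] at hb
    rw [mem_sdiff, mem_pif] at hx
    obtain ⟨⟨h0, hL, hmid⟩, hnot⟩ := hx
    rw [mem_singleton] at h0 hL
    subst h0
    refine ⟨hL, hb, fun k hk => (mem_nzs p).mp (hmid k hk), ?_⟩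
    by_contra hno
    push_neg at hno
    apply hnot
    rw [mem_pif]
    refine ⟨mem_singleton_self _, by simp [hL], fun k hk => ?_⟩
    rw [mem_Ms]
    exact ⟨hno k hk, (mem_nzs p).mp (hmid k hk)⟩
  · -- T2
    right; right; right
    simp only [T2] at hx
    rw [mem_biUnion] at hx
    obtain ⟨c, hc, hx⟩ := hx
    rw [mem_NDs] at hc
    rw [mem_biUnion] at hx
    obtain ⟨j, hj, hx⟩ := hx
    rw [mem_mids] at hj
    rw [mem_pif] at hx
    obtain ⟨h0, hL, hmid⟩ := hx
    rw [mem_singleton] at h0 hL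
    refine ⟨j, hj, by rw [h0, hL], by rw [h0]; exact hc, ?_, ?_⟩
    · have := hmid j hj
      simpa using this
    · intro k hk hkj
      have := hmid k hk
      rw [if_neg hkj, mem_Ms] at this
      exact this

lemma Z1 (hp3 : 3 ≤ p) {x : Fin (m+3) → ZMod p} (hx : x ∈ S p m) (h0 : x 0 = 0) :
    ((x (iL m)).val ≤ (p-1)/2 ∧ x (iL m) ≠ 0) ∧ (∀ k, Mid m k → x k ≠ 0) ∧
      (∃ k, Mid m k ∧ x k = 1) := by
  rcases S_dest p m hp3 hx with h | h | h | h
  · exact absurd h0 (h.1 0)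
  · exact h.2
  · exact absurd h0 (by simpa using h.2.1.2)
  · obtain ⟨j, -, -, hval, -⟩ := h
    rw [h0] at hval
    simp [ZMod.val_zero] at hval

lemma Z3 (hp3 : 3 ≤ p) {x : Fin (m+3) → ZMod p} (hx : x ∈ S p m) (hL : x (iL m) = 0) :
    ((x 0).val ≤ (p-1)/2 ∧ x 0 ≠ 0) ∧ (∀ k, Mid m k → x k ≠ 0) ∧
      (∃ k, Mid m k ∧ x k = 1) := by
  rcases S_dest p m hp3 hx with h | h | h | h
  · exact absurd hL (h.1 _)
  · exact absurd hL h.2.1.2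
  · exact h.2
  · obtain ⟨j, -, heq, hval, -⟩ := h
    rw [heq, hL] at hval
    simp [ZMod.val_zero] at hval

lemma Z2 (hp3 : 3 ≤ p) {x : Fin (m+3) → ZMod p} (hx : x ∈ S p m) {k : Fin (m+3)}
    (hk : Mid m k) (h0 : x k = 0) :
    x 0 = x (iL m) ∧ (p-1)/2 < (x 0).val ∧
      (∀ k', Mid m k' → k' ≠ k → x k' ≠ 1 ∧ x k' ≠ 0) := by
  rcases S_dest p m hp3 hx with h | h | h | h
  · exact absurd h0 (h.1 k)
  · exact absurd h0 (h.2.2.1 k hk)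
  · exact absurd h0 (h.2.2.1 k hk)
  · obtain ⟨j, hj, heq, hval, hj0, hrest⟩ := h
    by_cases hkj : k = j
    · subst hkj
      exact ⟨heq, hval, hrest⟩
    · exact absurd h0 (hrest k hk hkj).2

lemma Zall (hp3 : 3 ≤ p) {x : Fin (m+3) → ZMod p} (hx : x ∈ S p m)
    (hnz : ∀ i, x i ≠ 0) : ¬(x 0 = x (iL m) ∧ ∃ k, Mid m k ∧ x k = 1) := by
  rcases S_dest p m hp3 hx with h | h | h | h
  · exact h.2
  · exact absurd h.1 (hnz 0)
  · exact absurd h.1 (hnz _)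
  · obtain ⟨j, hj, -, -, hj0, -⟩ := h
    exact absurd hj0 (hnz j)


-- field helpers
section Field
variable {p : ℕ} [Fact p.Prime]

lemma root_spec {β : ZMod p} (α : ZMod p) (hβ : β ≠ 0) : α + (-α * β⁻¹) * β = 0 := by
  rw [mul_assoc, inv_mul_cancel₀ hβ, mul_one]
  ring

lemma solve_spec {β : ZMod p} (α v : ZMod p) (hβ : β ≠ 0) : α + ((v - α) * β⁻¹) * β = v := by
  rw [mul_assoc, inv_mul_cancel₀ hβ, mul_one]
  ring

lemma aff_eq {α β t t' v : ZMod p} (hβ : β ≠ 0) (h1 : α + t * β = v) (h2 : α + t' * β = v) :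
    t = t' := by
  have h3 : t * β = t' * β := by
    have := h1.trans h2.symm
    linear_combination this
  exact mul_right_cancel₀ hβ h3

end Field

lemma val_pos_of_ne_zero {p : ℕ} [NeZero p] {c : ZMod p} (h : c ≠ 0) : 1 ≤ c.val := by
  rcases Nat.eq_zero_or_pos c.val with h0 | h1
  · exact absurd ((ZMod.val_eq_zero c).mp h0) h
  · exact h1

lemma negD_contra {p : ℕ} [NeZero p] (hodd : p % 2 = 1) {c : ZMod p} (hc : c ≠ 0)
    (h1 : c.val ≤ (p-1)/2) (h2 : (-c).val ≤ (p-1)/2) : False := by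
  have hneg : (-c).val = p - c.val := by
    rw [ZMod.neg_val]
    simp [hc]
  have hlt : c.val < p := ZMod.val_lt c
  have hpos : 1 ≤ c.val := val_pos_of_ne_zero hc
  omega

section LineFree
variable (p m : ℕ) [Fact p.Prime]

lemma linefree (hp3 : 3 ≤ p) (hodd : p % 2 = 1) (a d : Fin (m+3) → ZMod p) (hd : d ≠ 0)
    (H : ∀ t : ZMod p, a + t • d ∈ S p m) : False := by
  have hP : ∀ (t : ZMod p) (i : Fin (m+3)), (a + t • d) i = a i + t * d i := by
    intro t i
    simp [Pi.add_apply, Pi.smul_apply, smul_eq_mul]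
  by_cases hA : a 0 = a (iL m) ∧ d 0 = d (iL m)
  · obtain ⟨ha, hdeq⟩ := hA
    by_cases hd0 : d 0 = 0
    · -- f ≡ g ≡ const c
      have hdL : d (iL m) = 0 := hdeq ▸ hd0
      by_cases hc0 : a 0 = 0
      · have h0 : (a + (0:ZMod p) • d) 0 = 0 := by rw [hP]; simp [hc0]
        have hz := Z1 p m hp3 (H 0) h0
        exact hz.1.2 (by rw [hP]; simp [hdL, ← ha, hc0])
      · -- c ≠ 0 : find a mid mover
        obtain ⟨j, hdj⟩ : ∃ j, d j ≠ 0 := by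
          by_contra hno
          push_neg at hno
          exact hd (funext fun i => hno i)
        have hjmid : Mid m j := by
          rcases mid_cases m j with rfl | rfl | h
          · exact (hdj hd0).elim
          · exact (hdj hdL).elim
          · exact h
        set tj := -(a j) * (d j)⁻¹ with htj
        have hβj : a j + tj * d j = 0 := root_spec (a j) hdj
        have hz2 := Z2 p m hp3 (H tj) hjmid (by rw [hP]; exact hβj)
        set sj := ((1:ZMod p) - a j) * (d j)⁻¹ with hsj
        have hβs : a j + sj * d j = 1 := solve_spec (a j) 1 hdj
        have hynz : ∀ i, (a + sj • d) i ≠ 0 := by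
          intro i
          rcases mid_cases m i with rfl | rfl | hi
          · rw [hP]
            simpa [hd0] using hc0
          · rw [hP]
            simp only [hdL, mul_zero, add_zero]
            rw [← ha]
            exact hc0
          · by_cases hdi : d i = 0
            · have hij : i ≠ j := fun h => hdj (h ▸ hdi)
              have hne := (hz2.2.2 i hi hij).2
              rw [hP] at hne
              rw [hP]
              simpa [hdi] using (by simpa [hdi] using hne : a i ≠ 0)
            · by_cases hij : i = j
              · subst hij
                rw [hP, hβs]
                exact one_ne_zero
              · set ti := -(a i) * (d i)⁻¹ with hti
                have hβi : a i + ti * d i = 0 := root_spec (a i) hdi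
                have hz2i := Z2 p m hp3 (H ti) hi (by rw [hP]; exact hβi)
                have hjne : j ≠ i := fun h => hij h.symm
                have hj_at_ti : a j + ti * d j ≠ 1 := by
                  have := (hz2i.2.2 j hjmid hjne).1
                  rw [hP] at this
                  exact this
                intro hyi0
                rw [hP] at hyi0
                have hst : sj = ti := aff_eq hdi hyi0 hβi
                exact hj_at_ti (by rw [← hst]; exact hβs)
        apply Zall p m hp3 (H sj) hynz
        constructor
        · rw [hP, hP]
          simp [hd0, hdL, ha]
        · exact ⟨j, hjmid, by rw [hP]; exact hβs⟩
    · -- f nonconstant, f ≡ g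
      set t0 := -(a 0) * (d 0)⁻¹ with ht0
      have hf0 : a 0 + t0 * d 0 = 0 := root_spec (a 0) hd0
      have hz := Z1 p m hp3 (H t0) (by rw [hP]; exact hf0)
      apply hz.1.2
      rw [hP, ← ha, ← hdeq]
      exact hf0
  · -- CASE B : f ≢ g
    by_cases hd0 : d 0 = 0 <;> by_cases hdL : d (iL m) = 0
    · -- both constant
      have hac : a 0 ≠ a (iL m) := fun h => hA ⟨h, hd0.trans hdL.symm⟩
      obtain ⟨j, hdj⟩ : ∃ j, d j ≠ 0 := by
        by_contra hno
        push_neg at hno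
        exact hd (funext fun i => hno i)
      have hjmid : Mid m j := by
        rcases mid_cases m j with rfl | rfl | h
        · exact (hdj hd0).elim
        · exact (hdj hdL).elim
        · exact h
      set tj := -(a j) * (d j)⁻¹ with htj
      have hβj : a j + tj * d j = 0 := root_spec (a j) hdj
      have hz2 := Z2 p m hp3 (H tj) hjmid (by rw [hP]; exact hβj)
      have heq := hz2.1
      rw [hP, hP] at heq
      simp [hd0, hdL] at heq
      exact hac heq
    · -- B2 : f const, g moving
      set t3 := -(a (iL m)) * (d (iL m))⁻¹ with ht3
      have hg3 : a (iL m) + t3 * d (iL m) = 0 := root_spec _ hdL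
      have hz3 := Z3 p m hp3 (H t3) (by rw [hP]; exact hg3)
      have hcD : (a 0).val ≤ (p-1)/2 ∧ a 0 ≠ 0 := by
        have h1 := hz3.1
        rw [hP] at h1
        simpa [hd0] using h1
      have hnomove : ∀ k, Mid m k → d k = 0 := by
        intro k hk
        by_contra hdk
        set tk := -(a k) * (d k)⁻¹ with htk
        have hβk : a k + tk * d k = 0 := root_spec _ hdk
        have hz2 := Z2 p m hp3 (H tk) hk (by rw [hP]; exact hβk)
        have hval := hz2.2.1
        rw [hP] at hval
        simp only [hd0, mul_zero, add_zero] at hval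
        omega
      obtain ⟨k1, hk1, hk1v⟩ := hz3.2.2
      rw [hP] at hk1v
      simp only [hnomove k1 hk1, mul_zero, add_zero] at hk1v
      have hmidnz : ∀ k, Mid m k → a k ≠ 0 := by
        intro k hk
        have := hz3.2.1 k hk
        rw [hP] at this
        simpa [hnomove k hk] using this
      set td := (a 0 - a (iL m)) * (d (iL m))⁻¹ with htd
      have hgd : a (iL m) + td * d (iL m) = a 0 := solve_spec _ _ hdL
      have hynz : ∀ i, (a + td • d) i ≠ 0 := by
        intro i
        rcases mid_cases m i with rfl | rfl | hi
        · rw [hP]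
          simpa [hd0] using hcD.2
        · rw [hP, hgd]
          exact hcD.2
        · rw [hP]
          simpa [hnomove i hi] using hmidnz i hi
      apply Zall p m hp3 (H td) hynz
      constructor
      · rw [hP, hP, hgd]
        simp [hd0]
      · refine ⟨k1, hk1, ?_⟩
        rw [hP]
        simpa [hnomove k1 hk1] using hk1v
    · -- B3 : f moving, g const
      set t1 := -(a 0) * (d 0)⁻¹ with ht1
      have hf1 : a 0 + t1 * d 0 = 0 := root_spec _ hd0
      have hz1 := Z1 p m hp3 (H t1) (by rw [hP]; exact hf1)
      have hcD : (a (iL m)).val ≤ (p-1)/2 ∧ a (iL m) ≠ 0 := by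
        have h1 := hz1.1
        rw [hP] at h1
        simpa [hdL] using h1
      have hnomove : ∀ k, Mid m k → d k = 0 := by
        intro k hk
        by_contra hdk
        set tk := -(a k) * (d k)⁻¹ with htk
        have hβk : a k + tk * d k = 0 := root_spec _ hdk
        have hz2 := Z2 p m hp3 (H tk) hk (by rw [hP]; exact hβk)
        have hval := hz2.2.1
        have heq := hz2.1
        rw [hP, hP] at heq
        rw [hP] at hval
        rw [heq] at hval
        simp only [hdL, mul_zero, add_zero] at hval
        omega
      obtain ⟨k1, hk1, hk1v⟩ := hz1.2.2
      rw [hP] at hk1v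
      simp only [hnomove k1 hk1, mul_zero, add_zero] at hk1v
      have hmidnz : ∀ k, Mid m k → a k ≠ 0 := by
        intro k hk
        have := hz1.2.1 k hk
        rw [hP] at this
        simpa [hnomove k hk] using this
      set td := (a (iL m) - a 0) * (d 0)⁻¹ with htd
      have hfd : a 0 + td * d 0 = a (iL m) := solve_spec _ _ hd0
      have hynz : ∀ i, (a + td • d) i ≠ 0 := by
        intro i
        rcases mid_cases m i with rfl | rfl | hi
        · rw [hP, hfd]
          exact hcD.2
        · rw [hP]
          simpa [hdL] using hcD.2
        · rw [hP]
          simpa [hnomove i hi] using hmidnz i hi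
      apply Zall p m hp3 (H td) hynz
      constructor
      · rw [hP, hP, hfd]
        simp [hdL]
      · refine ⟨k1, hk1, ?_⟩
        rw [hP]
        simpa [hnomove k1 hk1] using hk1v
    · -- B4 : both moving
      set t1 := -(a 0) * (d 0)⁻¹ with ht1
      have hf1 : a 0 + t1 * d 0 = 0 := root_spec _ hd0
      set t3 := -(a (iL m)) * (d (iL m))⁻¹ with ht3
      have hg3 : a (iL m) + t3 * d (iL m) = 0 := root_spec _ hdL
      have ht13 : t1 ≠ t3 := by
        intro h
        have hz := Z1 p m hp3 (H t1) (by rw [hP]; exact hf1)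
        apply hz.1.2
        rw [hP, h]
        exact hg3
      have hz1 := Z1 p m hp3 (H t1) (by rw [hP]; exact hf1)
      have hz3 := Z3 p m hp3 (H t3) (by rw [hP]; exact hg3)
      by_cases hmov : ∃ j, Mid m j ∧ d j ≠ 0
      · obtain ⟨j, hj, hdj⟩ := hmov
        set t2 := -(a j) * (d j)⁻¹ with ht2
        have hβ2 : a j + t2 * d j = 0 := root_spec _ hdj
        have hz2 := Z2 p m hp3 (H t2) hj (by rw [hP]; exact hβ2)
        have heq2 := hz2.1
        rw [hP, hP] at heq2
        have honly : ∀ k, Mid m k → k ≠ j → d k = 0 := by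
          intro k hk hkj
          by_contra hdk
          set tk := -(a k) * (d k)⁻¹ with htk
          have hβk : a k + tk * d k = 0 := root_spec _ hdk
          have hz2k := Z2 p m hp3 (H tk) hk (by rw [hP]; exact hβk)
          have heqk := hz2k.1
          rw [hP, hP] at heqk
          by_cases h2k : t2 = tk
          · have := (hz2.2.2 k hk hkj).2
            rw [hP] at this
            apply this
            rw [h2k]
            exact hβk
          · -- two roots of f - g : contradiction with hA
            apply hA
            have hdd : d 0 = d (iL m) := by
              have hdiff : (t2 - tk) * (d 0 - d (iL m)) = 0 := by
                linear_combination heq2 - heqk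
              rcases mul_eq_zero.mp hdiff with h | h
              · exact absurd (sub_eq_zero.mp h) h2k
              · exact sub_eq_zero.mp h
            refine ⟨?_, hdd⟩
            have := heq2
            rw [hdd] at this
            linear_combination this
        -- mids k ≠ j are constant with value in M
        have hconstM : ∀ k, Mid m k → k ≠ j → a k ≠ 1 ∧ a k ≠ 0 := by
          intro k hk hkj
          have := hz2.2.2 k hk hkj
          rw [hP] at this
          simpa [honly k hk hkj] using this
        -- the μ-mid at t1 must be j
        obtain ⟨k1, hk1, hk1v⟩ := hz1.2.2
        rw [hP] at hk1v
        have hk1j : k1 = j := by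
          by_contra hne
          have := (hconstM k1 hk1 hne).1
          apply this
          simpa [honly k1 hk1 hne] using hk1v
        rw [hk1j] at hk1v
        obtain ⟨k3, hk3, hk3v⟩ := hz3.2.2
        rw [hP] at hk3v
        have hk3j : k3 = j := by
          by_contra hne
          have := (hconstM k3 hk3 hne).1
          apply this
          simpa [honly k3 hk3 hne] using hk3v
        rw [hk3j] at hk3v
        exact ht13 (aff_eq hdj hk1v hk3v)
      · -- no movers
        push_neg at hmov
        have hnomove : ∀ k, Mid m k → d k = 0 := by
          intro k hk
          by_contra hdk
          exact hdk (hmov k hk) |>.elim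
        obtain ⟨k1, hk1, hk1v⟩ := hz1.2.2
        rw [hP] at hk1v
        simp only [hnomove k1 hk1, mul_zero, add_zero] at hk1v
        have hmidnz : ∀ k, Mid m k → a k ≠ 0 := by
          intro k hk
          have := hz1.2.1 k hk
          rw [hP] at this
          simpa [hnomove k hk] using this
        by_cases hde : d 0 = d (iL m)
        · -- e constant : F3 = -G1 contradiction with negD
          set G1 := a (iL m) + t1 * d (iL m) with hG1
          set F3 := a 0 + t3 * d 0 with hF3
          have hG1p : G1.val ≤ (p-1)/2 ∧ G1 ≠ 0 := by
            have := hz1.1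
            rw [hP] at this
            exact this
          have hF3p : F3.val ≤ (p-1)/2 ∧ F3 ≠ 0 := by
            have := hz3.1
            rw [hP] at this
            exact this
          have hFG : F3 = -G1 := by
            rw [hF3, hG1]
            linear_combination hf1 + hg3 + (t3 - t1) * hde
          exact negD_contra hodd hG1p.2 hG1p.1 (by rw [← hFG]; exact hF3p.1)
        · -- e moving : t* with f t* = g t*
          have hdne : d 0 - d (iL m) ≠ 0 := sub_ne_zero.mpr hde
          set ts := (a (iL m) - a 0) * (d 0 - d (iL m))⁻¹ with hts
          have hes : a 0 + ts * d 0 = a (iL m) + ts * d (iL m) := by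
            have := solve_spec (v := a (iL m) - a 0) (α := (0:ZMod p)) hdne
            rw [zero_add] at this
            linear_combination this
          have hγnz : a 0 + ts * d 0 ≠ 0 := by
            intro h
            have h1 : ts = t1 := aff_eq hd0 h hf1
            have h3 : ts = t3 := by
              apply aff_eq hdL _ hg3
              rw [← hes]
              exact h
            exact ht13 (h1 ▸ h3)
          have hynz : ∀ i, (a + ts • d) i ≠ 0 := by
            intro i
            rcases mid_cases m i with rfl | rfl | hi
            · rw [hP]; exact hγnz
            · rw [hP, ← hes]; exact hγnz
            · rw [hP]
              simpa [hnomove i hi] using hmidnz i hi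
          apply Zall p m hp3 (H ts) hynz
          constructor
          · rw [hP, hP]
            exact hes
          · refine ⟨k1, hk1, ?_⟩
            rw [hP]
            simpa [hnomove k1 hk1] using hk1v

end LineFree


section Counting
variable (p m : ℕ) [NeZero p]

lemma card_nzs : (nzs p).card = p - 1 := by
  rw [nzs, card_erase_of_mem (mem_univ _), card_univ, ZMod.card]

lemma one_ne_zero' (hp3 : 3 ≤ p) : (1 : ZMod p) ≠ 0 := by
  haveI : Fact (1 < p) := ⟨by omega⟩
  exact one_ne_zero

lemma card_Ms (hp3 : 3 ≤ p) : (Ms p).card = p - 2 := by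
  have h1 : (1 : ZMod p) ∈ (univ : Finset (ZMod p)).erase 0 :=
    mem_erase.mpr ⟨one_ne_zero' p hp3, mem_univ _⟩
  rw [Ms, card_erase_of_mem h1, card_erase_of_mem (mem_univ _), card_univ, ZMod.card]
  omega

lemma card_Ds (hp3 : 3 ≤ p) : (Ds p).card = (p-1)/2 := by
  have hlt : (p-1)/2 < p := by omega
  rw [show (p-1)/2 = (Finset.Icc 1 ((p-1)/2)).card by rw [Nat.card_Icc]; omega]
  refine card_bij' (i := fun (c : ZMod p) (_ : c ∈ Ds p) => c.val)
    (j := fun (v : ℕ) (_ : v ∈ Finset.Icc 1 ((p-1)/2)) => (v : ZMod p)) ?_ ?_ ?_ ?_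
  · intro c hc
    rw [mem_Ds] at hc
    rw [mem_Icc]
    exact ⟨val_pos_of_ne_zero hc.2, hc.1⟩
  · intro v hv
    rw [mem_Icc] at hv
    have hvlt : v < p := by omega
    show (v : ZMod p) ∈ Ds p
    rw [mem_Ds, ZMod.val_cast_of_lt hvlt]
    refine ⟨hv.2, fun h => ?_⟩
    have h2 := ZMod.val_cast_of_lt hvlt
    rw [h, ZMod.val_zero] at h2
    omega
  · intro c hc
    exact ZMod.natCast_rightInverse c
  · intro v hv
    rw [mem_Icc] at hv
    exact ZMod.val_cast_of_lt (by omega)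

lemma card_NDs (hp3 : 3 ≤ p) : (NDs p).card = p - 1 - (p-1)/2 := by
  rw [show p - 1 - (p-1)/2 = (Finset.Icc ((p-1)/2 + 1) (p-1)).card by rw [Nat.card_Icc]; omega]
  refine card_bij' (i := fun (c : ZMod p) (_ : c ∈ NDs p) => c.val)
    (j := fun (v : ℕ) (_ : v ∈ Finset.Icc ((p-1)/2 + 1) (p-1)) => (v : ZMod p)) ?_ ?_ ?_ ?_
  · intro c hc
    rw [mem_NDs] at hc
    show c.val ∈ Finset.Icc ((p-1)/2 + 1) (p-1)
    rw [mem_Icc]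
    have := ZMod.val_lt c
    omega
  · intro v hv
    rw [mem_Icc] at hv
    show (v : ZMod p) ∈ NDs p
    rw [mem_NDs, ZMod.val_cast_of_lt (by omega)]
    omega
  · intro c hc
    exact ZMod.natCast_rightInverse c
  · intro v hv
    rw [mem_Icc] at hv
    exact ZMod.val_cast_of_lt (by omega)

lemma mids_eq : mids m = (univ : Finset (Fin (m+3))) \ {0, iL m} := by
  ext i
  simp only [mem_mids, Mid, mem_sdiff, mem_univ, true_and, mem_insert, mem_singleton]
  tauto

lemma card_mids : (mids m).card = m + 1 := by
  rw [mids_eq, card_sdiff_of_subset (fun i _ => mem_univ i)]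
  have h2 : ({0, iL m} : Finset (Fin (m+3))).card = 2 := by
    rw [card_insert_of_notMem (by
      simp only [mem_singleton]
      exact fun h => iL_ne_zero m h.symm), card_singleton]
  rw [card_univ, Fintype.card_fin, h2]
  omega

lemma card_pif (A B : Finset (ZMod p)) (C : Fin (m+3) → Finset (ZMod p)) :
    (pif p m A B C).card = A.card * B.card * ∏ k ∈ mids m, (C k).card := by
  rw [pif, Fintype.card_piFinset]
  have huniv : (univ : Finset (Fin (m+3))) = insert 0 (insert (iL m) (mids m)) := by
    ext i
    simp only [mem_univ, mem_insert, mem_mids, true_iff]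
    rcases mid_cases m i with h | h | h
    · exact Or.inl h
    · exact Or.inr (Or.inl h)
    · exact Or.inr (Or.inr h)
  rw [huniv, prod_insert, prod_insert]
  · have h0 : fam p m A B C 0 = A := by simp [fam]
    have hL : fam p m A B C (iL m) = B := by simp [fam, iL_ne_zero m]
    have hC : ∏ k ∈ mids m, (fam p m A B C k).card = ∏ k ∈ mids m, (C k).card :=
      Finset.prod_congr rfl (fun k hk => by
        rw [mem_mids] at hk
        simp [fam, hk.1, hk.2])
    rw [h0, hL, hC, mul_assoc]
  · rw [mem_mids]
    intro h
    exact h.2 rfl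
  · rw [mem_insert]
    push_neg
    exact ⟨fun h => iL_ne_zero m h.symm, fun h => ((mem_mids m).mp h).1 rfl⟩

lemma pif_subset_pif {A A' B B' : Finset (ZMod p)} {C C' : Fin (m+3) → Finset (ZMod p)}
    (hA : A ⊆ A') (hB : B ⊆ B') (hC : ∀ k, Mid m k → C k ⊆ C' k) :
    pif p m A B C ⊆ pif p m A' B' C' := by
  intro x hx
  rw [mem_pif] at hx ⊢
  exact ⟨hA hx.1, hB hx.2.1, fun k hk => hC k hk (hx.2.2 k hk)⟩

lemma Ms_subset_nzs : Ms p ⊆ nzs p := by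
  intro c hc
  rw [mem_Ms] at hc
  rw [mem_nzs]
  exact hc.2

-- cardinality of an "nzs minus Ms" slice
lemma card_slice (hp3 : 3 ≤ p) (A B : Finset (ZMod p)) :
    (pif p m A B (fun _ => nzs p) \ pif p m A B (fun _ => Ms p)).card
      = A.card * B.card * ((p-1)^(m+1) - (p-2)^(m+1)) := by
  rw [card_sdiff_of_subset (pif_subset_pif p m (subset_refl _) (subset_refl _)
      (fun _ _ => Ms_subset_nzs p))]
  rw [card_pif, card_pif]
  rw [prod_const, prod_const, card_mids, card_nzs, card_Ms p hp3]
  rw [Nat.mul_sub]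

end Counting


section Cards2
variable (p m : ℕ) [NeZero p]

lemma card_Wg (hp3 : 3 ≤ p) :
    (Wg p m).card = (p-1) * ((p-1)^(m+1) - (p-2)^(m+1)) := by
  rw [Wg, card_biUnion]
  · rw [Finset.sum_congr rfl (fun c _ => card_slice p m hp3 {c} {c})]
    simp only [card_singleton, one_mul]
    rw [sum_const, card_nzs, smul_eq_mul]
  · intro c _ c' _ hcc
    simp only [Function.onFun, Finset.disjoint_left]
    intro x hx hx'
    apply hcc
    have h1 := ((mem_pif p m).mp (mem_sdiff.mp hx).1).1
    have h2 := ((mem_pif p m).mp (mem_sdiff.mp hx').1).1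
    rw [mem_singleton] at h1 h2
    rw [← h1, ← h2]

lemma card_T1 (hp3 : 3 ≤ p) :
    (T1 p m).card = (p-1)/2 * ((p-1)^(m+1) - (p-2)^(m+1)) := by
  rw [T1, card_biUnion]
  · rw [Finset.sum_congr rfl (fun b _ => card_slice p m hp3 {0} {b})]
    simp only [card_singleton, one_mul]
    rw [sum_const, card_Ds p hp3, smul_eq_mul]
  · intro b _ b' _ hbb
    simp only [Function.onFun, Finset.disjoint_left]
    intro x hx hx'
    apply hbb
    have h1 := ((mem_pif p m).mp (mem_sdiff.mp hx).1).2.1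
    have h2 := ((mem_pif p m).mp (mem_sdiff.mp hx').1).2.1
    rw [mem_singleton] at h1 h2
    rw [← h1, ← h2]

lemma card_T3 (hp3 : 3 ≤ p) :
    (T3 p m).card = (p-1)/2 * ((p-1)^(m+1) - (p-2)^(m+1)) := by
  rw [T3, card_biUnion]
  · rw [Finset.sum_congr rfl (fun b _ => card_slice p m hp3 {b} {0})]
    simp only [card_singleton, one_mul]
    rw [sum_const, card_Ds p hp3, smul_eq_mul]
  · intro b _ b' _ hbb
    simp only [Function.onFun, Finset.disjoint_left]
    intro x hx hx'
    apply hbb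
    have h1 := ((mem_pif p m).mp (mem_sdiff.mp hx).1).1
    have h2 := ((mem_pif p m).mp (mem_sdiff.mp hx').1).1
    rw [mem_singleton] at h1 h2
    rw [← h1, ← h2]

lemma card_T2_inner (hp3 : 3 ≤ p) (c : ZMod p) {j : Fin (m+3)} (hj : j ∈ mids m) :
    (pif p m {c} {c} (fun k => if k = j then ({0} : Finset (ZMod p)) else Ms p)).card
      = (p-2)^m := by
  rw [card_pif]
  rw [← Finset.mul_prod_erase (mids m) _ hj]
  simp only [if_pos rfl, card_singleton, one_mul]
  have : ∀ k ∈ (mids m).erase j,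
      ((if k = j then ({0} : Finset (ZMod p)) else Ms p)).card = p - 2 := by
    intro k hk
    rw [if_neg (mem_erase.mp hk).1, card_Ms p hp3]
  rw [Finset.prod_congr rfl this, prod_const]
  rw [card_erase_of_mem hj, card_mids]
  simp

lemma card_T2 (hp3 : 3 ≤ p) (hodd : p % 2 = 1) :
    (T2 p m).card = (p-1)/2 * ((m+1) * (p-2)^m) := by
  rw [T2, card_biUnion]
  · have hinner : ∀ c ∈ NDs p,
        ((mids m).biUnion (fun j => pif p m {c} {c}
          (fun k => if k = j then ({0} : Finset (ZMod p)) else Ms p))).card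
        = (m+1) * (p-2)^m := by
      intro c _
      rw [card_biUnion]
      · rw [Finset.sum_congr rfl (fun j hj => card_T2_inner p m hp3 c hj), sum_const,
          card_mids, smul_eq_mul]
      · intro j hj j' hj' hjj
        simp only [Function.onFun, Finset.disjoint_left]
        intro x hx hx'
        have h1 := ((mem_pif p m).mp hx).2.2 j ((mem_mids m).mp hj)
        have h2 := ((mem_pif p m).mp hx').2.2 j ((mem_mids m).mp hj)
        rw [if_pos rfl, mem_singleton] at h1
        rw [if_neg hjj, mem_Ms] at h2
        exact h2.2 h1
    rw [Finset.sum_congr rfl hinner, sum_const, smul_eq_mul, card_NDs p hp3]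
    have : p - 1 - (p-1)/2 = (p-1)/2 := by omega
    rw [this]
  · intro c _ c' _ hcc
    simp only [Function.onFun, Finset.disjoint_left]
    intro x hx hx'
    apply hcc
    rw [mem_biUnion] at hx hx'
    obtain ⟨j, hj, hx⟩ := hx
    obtain ⟨j', hj', hx'⟩ := hx'
    have h1 := ((mem_pif p m).mp hx).1
    have h2 := ((mem_pif p m).mp hx').1
    rw [mem_singleton] at h1 h2
    rw [← h1, ← h2]

end Cards2


section Total
variable (p m : ℕ) [NeZero p]

lemma card_grid : (grid p m).card = (p-1)^(m+3) := by
  rw [grid, card_pif, prod_const, card_mids, card_nzs]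
  ring

lemma Wg_subset_grid : Wg p m ⊆ grid p m := by
  rw [Wg]
  apply biUnion_subset.mpr
  intro c hc
  apply Subset.trans sdiff_subset
  apply pif_subset_pif
  · intro x hx
    rw [mem_singleton] at hx
    rw [hx, mem_nzs]
    exact (mem_nzs p).mp hc
  · intro x hx
    rw [mem_singleton] at hx
    rw [hx, mem_nzs]
    exact (mem_nzs p).mp hc
  · exact fun _ _ => subset_refl _

lemma SG_facts {x : Fin (m+3) → ZMod p} (hx : x ∈ grid p m \ Wg p m) :
    ∀ i, x i ≠ 0 := by
  have hg := (mem_sdiff.mp hx).1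
  rw [grid, mem_pif] at hg
  intro i
  rcases mid_cases m i with rfl | rfl | hi
  · exact (mem_nzs p).mp hg.1
  · exact (mem_nzs p).mp hg.2.1
  · exact (mem_nzs p).mp (hg.2.2 i hi)

lemma T1_facts {x : Fin (m+3) → ZMod p} (hx : x ∈ T1 p m) :
    x 0 = 0 ∧ x (iL m) ≠ 0 := by
  simp only [T1] at hx
  rw [mem_biUnion] at hx
  obtain ⟨b, hb, hx⟩ := hx
  have h := (mem_pif p m).mp (mem_sdiff.mp hx).1
  have h0 := mem_singleton.mp h.1
  have hL := mem_singleton.mp h.2.1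
  refine ⟨h0, ?_⟩
  rw [hL]
  exact ((mem_Ds p).mp hb).2

lemma T3_facts {x : Fin (m+3) → ZMod p} (hx : x ∈ T3 p m) :
    x (iL m) = 0 ∧ x 0 ≠ 0 := by
  simp only [T3] at hx
  rw [mem_biUnion] at hx
  obtain ⟨b, hb, hx⟩ := hx
  have h := (mem_pif p m).mp (mem_sdiff.mp hx).1
  have hL := h.2.1
  have h0 := h.1
  rw [mem_singleton] at hL h0
  refine ⟨hL, ?_⟩
  rw [h0]
  exact ((mem_Ds p).mp hb).2

lemma T2_facts {x : Fin (m+3) → ZMod p} (hx : x ∈ T2 p m) :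
    x 0 ≠ 0 ∧ x (iL m) ≠ 0 ∧ ∃ j, x j = 0 := by
  simp only [T2] at hx
  rw [mem_biUnion] at hx
  obtain ⟨c, hc, hx⟩ := hx
  rw [mem_biUnion] at hx
  obtain ⟨j, hj, hx⟩ := hx
  have h := (mem_pif p m).mp hx
  have h0 := h.1
  have hL := h.2.1
  rw [mem_singleton] at h0 hL
  have hc0 : c ≠ 0 := by
    intro hh
    have := (mem_NDs p).mp hc
    rw [hh, ZMod.val_zero] at this
    omega
  refine ⟨by rw [h0]; exact hc0, by rw [hL]; exact hc0, j, ?_⟩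
  have := h.2.2 j ((mem_mids m).mp hj)
  rw [if_pos rfl, mem_singleton] at this
  exact this

lemma card_S (hp3 : 3 ≤ p) (hodd : p % 2 = 1) :
    (S p m).card = (p-1)^(m+3) + (m+1) * ((p-1)/2) * (p-2)^m := by
  have d1 : Disjoint (grid p m \ Wg p m) (T1 p m) := by
    rw [Finset.disjoint_left]
    intro x hx hx'
    exact SG_facts p m hx 0 (T1_facts p m hx').1
  have d2 : Disjoint (T3 p m) (T2 p m) := by
    rw [Finset.disjoint_left]
    intro x hx hx'
    exact (T2_facts p m hx').2.1 (T3_facts p m hx).1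
  have d3 : Disjoint ((grid p m \ Wg p m) ∪ T1 p m) (T3 p m ∪ T2 p m) := by
    rw [Finset.disjoint_left]
    intro x hx hx'
    rw [mem_union] at hx hx'
    rcases hx with hx | hx <;> rcases hx' with hx' | hx'
    · exact SG_facts p m hx _ (T3_facts p m hx').1
    · obtain ⟨j, hj⟩ := (T2_facts p m hx').2.2
      exact SG_facts p m hx j hj
    · exact (T3_facts p m hx').2 (T1_facts p m hx).1
    · exact (T2_facts p m hx').1 (T1_facts p m hx).1
  rw [S, card_union_of_disjoint d3, card_union_of_disjoint d1, card_union_of_disjoint d2]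
  rw [card_sdiff_of_subset (Wg_subset_grid p m), card_grid, card_Wg p m hp3, card_T1 p m hp3,
    card_T3 p m hp3, card_T2 p m hp3 hodd]
  set w := (p-1)^(m+1) - (p-2)^(m+1) with hw
  set h := (p-1)/2 with hh
  have h2h : h + h = p - 1 := by omega
  have hYZ : (p-1) * w = h * w + h * w := by rw [← h2h]; ring
  have hle : (p-1) * w ≤ (p-1)^(m+3) := by
    calc (p-1) * w ≤ (p-1) * (p-1)^(m+1) := by
          apply Nat.mul_le_mul_left
          exact Nat.sub_le _ _
      _ = (p-1)^(m+2) := by ring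
      _ ≤ (p-1)^(m+3) := Nat.pow_le_pow_right (by omega) (by omega)
  have hD : (m+1) * h * (p-2)^m = h * ((m+1) * (p-2)^m) := by ring
  omega

end Total

end Stmt8


theorem stmt_8 (p n : ℕ) (hp : p.Prime) (hp3 : 3 ≤ p) (hn : 3 ≤ n) :
    ∃ S : Finset (Fin n → ZMod p), ProgFree p n p S ∧
      ((p : ℝ) - 1) ^ n + (((n : ℝ) - 2) / 2) * ((p : ℝ) - 1) * ((p : ℝ) - 2) ^ (n - 3)
        ≤ (S.card : ℝ) := by
  obtain ⟨m, rfl⟩ : ∃ m, n = m + 3 := ⟨n - 3, by omega⟩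
  haveI : Fact p.Prime := ⟨hp⟩
  have hodd : p % 2 = 1 := Nat.odd_iff.mp (hp.odd_of_ne_two (by omega))
  refine ⟨Stmt8.S p m, ?_, ?_⟩
  · rintro ⟨a, d, hd, hall⟩
    apply Stmt8.linefree p m hp3 hodd a d hd
    intro t
    have h := hall t.val (ZMod.val_lt t)
    rwa [show ((t.val : ℕ) : ZMod p) = t from ZMod.natCast_rightInverse t] at h
  · rw [Stmt8.card_S p m hp3 hodd]
    apply le_of_eq
    have h1 : (1:ℕ) ≤ p := by omega
    have h2 : (2:ℕ) ≤ p := by omega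
    have hc1 : ((p - 1 : ℕ) : ℝ) = (p : ℝ) - 1 := by
      rw [Nat.cast_sub h1, Nat.cast_one]
    have hc2 : ((p - 2 : ℕ) : ℝ) = (p : ℝ) - 2 := by
      rw [Nat.cast_sub h2, Nat.cast_two]
    have hcH : (((p-1)/2 : ℕ) : ℝ) = ((p:ℝ) - 1)/2 := by
      have hk : (p - 1 : ℕ) = 2 * ((p-1)/2) := by omega
      have hck := congrArg (Nat.cast : ℕ → ℝ) hk
      rw [Nat.cast_mul, Nat.cast_two, hc1] at hck
      linarith
    simp only [Nat.add_sub_cancel]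
    push_cast
    rw [hc1, hc2, hcH]
    ring
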